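/- Let f : Y → X be a morphism of locally noetherian schemes with a section g : X → Y, and D ⊆ X a closed subscheme that is a Cartier divisor, with i : D → X the inclusion. Assume g is a regular immersion. Then the exceptional divisor E_[D] of the blow-up of Y along g(D) intersected with the dilatation Y_(D) is canonically isomorphic to the vector bundle V((g∘i)*Ω¹_{Y/X} ⊗ O_D(D)) over D. -/

import Mathlib

open MvPolynomial

namespace Statement11Aux

variable {R : Type*} [CommRing R]

lemma isHom_iff {n : ℕ} {φ : MvPolynomial (Fin n) R} {d : ℕ} :
    φ.IsHomogeneous d ↔ ∀ ⦃m⦄, coeff m φ ≠ 0 → m.degree = d := by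
  unfold IsHomogeneous IsWeightedHomogeneous
  simp_rw [Finsupp.degree_eq_weight_one]
  rfl

lemma degree_univ {n : ℕ} (f : Fin n →₀ ℕ) : f.degree = ∑ i, f i :=
  Finset.sum_subset (Finset.subset_univ _)
    (fun i _ hi => Finsupp.notMem_support_iff.mp hi)

lemma degree_cons {n : ℕ} (y : ℕ) (m : Fin n →₀ ℕ) :
    (Finsupp.cons y m).degree = y + m.degree := by
  rw [degree_univ, degree_univ, Fin.sum_univ_succ]
  simp [Finsupp.cons_zero, Finsupp.cons_succ]

lemma degree_add {n : ℕ} (f g : Fin n →₀ ℕ) :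
    (f + g).degree = f.degree + g.degree := by
  simp only [Finsupp.degree_eq_weight_one]; exact map_add _ f g

lemma degree_single {n : ℕ} (i : Fin n) (k : ℕ) :
    (Finsupp.single i k).degree = k := by
  simp only [Finsupp.degree_eq_weight_one, Finsupp.weight_apply]
  rw [Finsupp.sum_single_index] <;> simp

lemma degree_equivMapDomain {n : ℕ} (e : Fin n ≃ Fin n) (f : Fin n →₀ ℕ) :
    (Finsupp.equivMapDomain e f).degree = f.degree := by
  rw [degree_univ, degree_univ]
  simp only [Finsupp.equivMapDomain_apply]
  exact Equiv.sum_comp e.symm f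

lemma prod_pow_mem {n : ℕ} (x : Fin n → R) (m : Fin n →₀ ℕ) :
    (∏ i ∈ m.support, x i ^ m i) ∈ (Ideal.span (Set.range x)) ^ m.degree := by
  rw [Finsupp.degree_apply, ← Finset.prod_pow_eq_pow_sum]
  exact Ideal.prod_mem_prod fun i _ => Ideal.pow_mem_pow (Ideal.subset_span (Set.mem_range_self i)) _

lemma eval_mem_pow {n d : ℕ} {x : Fin n → R} {F : MvPolynomial (Fin n) R}
    (hF : F.IsHomogeneous d) :
    eval x F ∈ Ideal.span (Set.range x) ^ d := by
  rw [eval_eq]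
  refine Ideal.sum_mem _ fun m hm => ?_
  have hd : m.degree = d := isHom_iff.mp hF (mem_support_iff.mp hm)
  exact hd ▸ Ideal.mul_mem_left _ _ (prod_pow_mem x m)

lemma eval_mem_pow_succ {n d : ℕ} {x : Fin n → R} {F : MvPolynomial (Fin n) R}
    (hF : F.IsHomogeneous d) (hc : ∀ m, coeff m F ∈ Ideal.span (Set.range x)) :
    eval x F ∈ Ideal.span (Set.range x) ^ (d + 1) := by
  rw [eval_eq, pow_succ']
  refine Ideal.sum_mem _ fun m hm => Ideal.mul_mem_mul (hc m) ?_
  exact (isHom_iff.mp hF (mem_support_iff.mp hm)) ▸ prod_pow_mem x m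

lemma exists_homog {n : ℕ} (x : Fin n → R) (e : ℕ) :
    ∀ z : R, z ∈ Ideal.span (Set.range x) ^ e →
      ∃ F : MvPolynomial (Fin n) R, F.IsHomogeneous e ∧ eval x F = z := by
  induction e with
  | zero => exact fun z _ => ⟨C z, isHomogeneous_C _ _, eval_C _⟩
  | succ e ih =>
    intro z hz
    rw [pow_succ] at hz
    refine Submodule.mul_induction_on hz ?_ ?_
    · intro p hp q hq
      obtain ⟨F, hF, rfl⟩ := ih p hp
      obtain ⟨c, rfl⟩ := (Submodule.mem_span_range_iff_exists_fun R).mp hq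
      refine ⟨F * ∑ i, C (c i) * X i, ?_, ?_⟩
      · have h1 : (∑ i, C (c i) * X i : MvPolynomial (Fin n) R).IsHomogeneous 1 := by
          refine IsHomogeneous.sum _ _ _ fun i _ => ?_
          exact (isHomogeneous_X _ _).C_mul _
        exact hF.mul h1
      · simp [smul_eq_mul]
    · rintro y z ⟨F₁, h₁, rfl⟩ ⟨F₂, h₂, rfl⟩
      exact ⟨F₁ + F₂, h₁.add h₂, by simp⟩

lemma exists_linear_comb {n : ℕ} (x : Fin n → R) (e : ℕ) (z : R)
    (hz : z ∈ Ideal.span (Set.range x) ^ (e + 1)) :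
    ∃ L : Fin n → MvPolynomial (Fin n) R,
      (∀ j, (L j).IsHomogeneous e) ∧ ∑ j, x j * eval x (L j) = z := by
  rw [pow_succ] at hz
  refine Submodule.mul_induction_on hz ?_ ?_
  · intro p hp q hq
    obtain ⟨F, hF, rfl⟩ := exists_homog x e p hp
    obtain ⟨c, rfl⟩ := (Submodule.mem_span_range_iff_exists_fun R).mp hq
    refine ⟨fun j => C (c j) * F, fun j => hF.C_mul _, ?_⟩
    rw [Finset.mul_sum]
    refine Finset.sum_congr rfl fun j _ => ?_
    simp [smul_eq_mul]
    ring
  · rintro y z ⟨L₁, h₁, rfl⟩ ⟨L₂, h₂, rfl⟩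
    refine ⟨L₁ + L₂, fun j => (h₁ j).add (h₂ j), ?_⟩
    simp [mul_add, Finset.sum_add_distrib]


lemma pow_le_pow_base {I J : Ideal R} (h : I ≤ J) (n : ℕ) : I ^ n ≤ J ^ n := by
  induction n with
  | zero => simp
  | succ n ih => rw [pow_succ, pow_succ]; exact Ideal.mul_mono ih h

/-- `QRseq x` : the family `x` is quasi-regular. -/
def QRseq {n : ℕ} (x : Fin n → R) : Prop :=
  ∀ (d : ℕ) (F : MvPolynomial (Fin n) R), F.IsHomogeneous d →
    eval x F ∈ Ideal.span (Set.range x) ^ (d + 1) →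
    ∀ m, coeff m F ∈ Ideal.span (Set.range x)

lemma colon_pow {k : ℕ} {x : Fin k → R} (hQR : QRseq x) {t : R}
    (ht : ∀ z : R, z * t ∈ Ideal.span (Set.range x) → z ∈ Ideal.span (Set.range x)) :
    ∀ (e : ℕ) (z : R), z * t ∈ Ideal.span (Set.range x) ^ e →
      z ∈ Ideal.span (Set.range x) ^ e := by
  intro e
  induction e with
  | zero => intro z _; simpa using Submodule.mem_top
  | succ e ih =>
    intro z hz
    have hz' : z ∈ Ideal.span (Set.range x) ^ e :=
      ih z (Ideal.pow_le_pow_right (Nat.le_succ e) hz)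
    obtain ⟨F, hF, rfl⟩ := exists_homog x e z hz'
    have h2 : (C t * F).IsHomogeneous e := hF.C_mul t
    have h3 : eval x (C t * F) ∈ Ideal.span (Set.range x) ^ (e + 1) := by
      simpa [mul_comm] using hz
    have h4 := hQR e (C t * F) h2 h3
    refine eval_mem_pow_succ hF fun m => ht _ ?_
    have h5 := h4 m
    rw [coeff_C_mul] at h5
    rwa [mul_comm]

lemma qr_zero (x : Fin 0 → R) : QRseq x := by
  intro d F hF hev m
  have hm : m = 0 := Finsupp.ext fun i => i.elim0
  have hFC : F = C (coeff 0 F) := by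
    refine MvPolynomial.ext _ _ fun m' => ?_
    have : m' = 0 := Finsupp.ext fun i => i.elim0
    subst this; simp
  rw [Set.range_eq_empty, Ideal.span_empty, ← Ideal.zero_eq_bot,
    zero_pow d.succ_ne_zero] at hev
  have h0 : eval x F = 0 := by simpa using hev
  subst hm
  have : coeff 0 F = 0 := by
    have := congrArg (eval x) hFC
    rw [eval_C] at this
    rw [← this, h0]
  simp [this]

theorem qr_of_rev {n : ℕ} (x : Fin n → R)
    (hx : ∀ i : Fin n, ∀ z : R, z * x i ∈ Ideal.span (x '' {j | i < j}) →
      z ∈ Ideal.span (x '' {j | i < j})) :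
    QRseq x := by
  induction n with
  | zero => exact qr_zero x
  | succ k IH =>
    set x' : Fin k → R := x ∘ Fin.succ with hx'def
    have hx0 : x = Fin.cons (x 0) x' := (Fin.cons_self_tail x).symm
    have hrange' : Set.range x' = x '' {j | 0 < j} := by
      ext y; constructor
      · rintro ⟨j, rfl⟩; exact ⟨j.succ, j.succ_pos, rfl⟩
      · rintro ⟨j, hj, rfl⟩
        induction j using Fin.cases with
        | zero => exact absurd hj (by simp)
        | succ j' => exact ⟨j', rfl⟩
    have hIH : QRseq x' := by
      refine IH x' fun i z hz => ?_
      have hset : x' '' {j | i < j} = x '' {j | i.succ < j} := by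
        ext y; constructor
        · rintro ⟨j, hj, rfl⟩; exact ⟨j.succ, Fin.succ_lt_succ_iff.mpr hj, rfl⟩
        · rintro ⟨j, hj, rfl⟩
          induction j using Fin.cases with
          | zero => exact absurd hj (by simp [Fin.lt_iff_val_lt_val])
          | succ j' => exact ⟨j', Fin.succ_lt_succ_iff.mp hj, rfl⟩
      rw [hset] at hz ⊢
      exact hx i.succ z hz
    have hsub : Set.range x' ⊆ Set.range x := by
      rintro y ⟨j, rfl⟩; exact ⟨j.succ, rfl⟩
    have hI'I : Ideal.span (Set.range x') ≤ Ideal.span (Set.range x) :=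
      Ideal.span_mono hsub
    have ht : ∀ z : R, z * x 0 ∈ Ideal.span (Set.range x') →
        z ∈ Ideal.span (Set.range x') := by
      intro z hz
      rw [hrange'] at hz ⊢
      exact hx 0 z hz
    have hx0I : x 0 ∈ Ideal.span (Set.range x) :=
      Ideal.subset_span (Set.mem_range_self 0)
    intro d
    induction d using Nat.strong_induction_on with
    | _ d Sd =>
    have key : ∀ F : MvPolynomial (Fin (k+1)) R, F.IsHomogeneous d → eval x F = 0 →
        ∀ m, coeff m F ∈ Ideal.span (Set.range x) := by
      match d, Sd with
      | 0, _ =>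
        intro F hF hev0 m
        by_cases hm : m = 0
        · subst hm
          have hFC : F = C (coeff 0 F) := by
            refine MvPolynomial.ext _ _ fun m' => ?_
            by_cases hm' : m' = 0
            · subst hm'; simp
            · rw [coeff_C, if_neg (Ne.symm hm')]
              by_contra hc
              exact hm' ((Finsupp.degree_eq_zero_iff m').mp (isHom_iff.mp hF hc))
          have : coeff 0 F = 0 := by
            have h := congrArg (eval x) hFC
            rw [eval_C] at h
            rw [← h, hev0]
          simp [this]
        · have : coeff m F = 0 := by
            by_contra hc
            exact hm ((Finsupp.degree_eq_zero_iff m).mp (isHom_iff.mp hF hc))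
          simp [this]
      | (e+1), Sd =>
        intro F hF hev0
        set p := finSuccEquiv R k F with hp
        set g := p.coeff 0 with hg
        set H := (finSuccEquiv R k).symm p.divX with hH
        have hpH : finSuccEquiv R k H = p.divX := (finSuccEquiv R k).apply_symm_apply _
        have hFeval : eval x F = Polynomial.eval (x 0) (Polynomial.map (eval x') p) := by
          conv_lhs => rw [hx0]
          exact eval_eq_eval_mv_eval' x' (x 0) F
        have hHeval : eval x H = Polynomial.eval (x 0) (Polynomial.map (eval x') p.divX) := by
          conv_lhs => rw [hx0]
          rw [eval_eq_eval_mv_eval' x' (x 0) H, hpH]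
        have hdecomp : eval x' g + x 0 * eval x H = 0 := by
          rw [hHeval, ← hev0, hFeval]
          conv_rhs => rw [← Polynomial.X_mul_divX_add p]
          simp only [Polynomial.map_add, Polynomial.map_mul, Polynomial.map_X,
            Polynomial.map_C, Polynomial.eval_add, Polynomial.eval_mul, Polynomial.eval_X,
            Polynomial.eval_C, hg]
          ring
        have hgh : g.IsHomogeneous (e+1) := by
          refine isHom_iff.mpr fun m' hm' => ?_
          rw [hg, finSuccEquiv_coeff_coeff] at hm'
          have := isHom_iff.mp hF hm'
          rwa [degree_cons, zero_add] at this
        have hHh : H.IsHomogeneous e := by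
          refine isHom_iff.mpr fun m₁ hm₁ => ?_
          rw [← Finsupp.cons_tail m₁, ← finSuccEquiv_coeff_coeff, hpH,
            Polynomial.coeff_divX, finSuccEquiv_coeff_coeff] at hm₁
          have := isHom_iff.mp hF hm₁
          rw [degree_cons] at this
          rw [← Finsupp.cons_tail m₁, degree_cons]
          omega
        have hgmem : eval x' g ∈ Ideal.span (Set.range x') ^ (e+1) := eval_mem_pow hgh
        have hth : (eval x H) * (x 0) ∈ Ideal.span (Set.range x') ^ (e+1) := by
          have hneg : (eval x H) * (x 0) = - eval x' g := by
            linear_combination hdecomp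
          rw [hneg]; exact neg_mem hgmem
        have hh : eval x H ∈ Ideal.span (Set.range x') ^ (e+1) :=
          colon_pow hIH ht (e+1) _ hth
        have hHI : ∀ m', coeff m' H ∈ Ideal.span (Set.range x) :=
          Sd e (Nat.lt_succ_self e) H hHh (pow_le_pow_base hI'I (e+1) hh)
        obtain ⟨F₂, hF₂h, hF₂e⟩ := exists_homog x' (e+1) _ hh
        have hcomb : eval x' (g + C (x 0) * F₂) = 0 := by
          rw [map_add, map_mul, eval_C, hF₂e]
          exact hdecomp
        have hgI : ∀ m', coeff m' g ∈ Ideal.span (Set.range x) := by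
          intro m'
          have h0 : eval x' (g + C (x 0) * F₂) ∈ Ideal.span (Set.range x') ^ (e+1+1) := by
            rw [hcomb]; exact zero_mem _
          have h1 := hIH (e+1) _ (hgh.add (hF₂h.C_mul _)) h0 m'
          have h2 : coeff m' g = coeff m' (g + C (x 0) * F₂) - x 0 * coeff m' F₂ := by
            rw [coeff_add, coeff_C_mul]; ring
          rw [h2]
          exact sub_mem (hI'I h1) (Ideal.mul_mem_right _ _ hx0I)
        intro m
        rw [← Finsupp.cons_tail m, ← finSuccEquiv_coeff_coeff]
        rcases h0 : (m 0) with _ | i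
        · exact hgI _
        · rw [show p.coeff (i + 1) = (finSuccEquiv R k H).coeff i by
            rw [hpH, Polynomial.coeff_divX], finSuccEquiv_coeff_coeff]
          exact hHI _
    intro F hF hev m
    obtain ⟨L, hL, hsum⟩ := exists_linear_comb x d (eval x F) hev
    have hF'h : (F - ∑ j, C (x j) * L j).IsHomogeneous d :=
      hF.sub (IsHomogeneous.sum _ _ _ fun j _ => (hL j).C_mul _)
    have hev' : eval x (F - ∑ j, C (x j) * L j) = 0 := by
      rw [map_sub, map_sum]
      simp only [map_mul, eval_C]
      rw [hsum, sub_self]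
    have hkey := key _ hF'h hev' m
    have hcoeff : coeff m F = coeff m (F - ∑ j, C (x j) * L j) + ∑ j, x j * coeff m (L j) := by
      rw [coeff_sub, coeff_sum]
      simp only [coeff_C_mul]
      ring
    rw [hcoeff]
    refine Ideal.add_mem _ hkey (Ideal.sum_mem _ fun j _ => ?_)
    exact Ideal.mul_mem_right _ _ (Ideal.subset_span (Set.mem_range_self j))


lemma mem_pow_of_pow_zero_mul_mem {n : ℕ} {x : Fin (n+1) → R} (hQR : QRseq x) :
    ∀ (e m : ℕ) (z : R), x 0 ^ m * z ∈ Ideal.span (Set.range x) ^ (m + e + 1) →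
      z ∈ Ideal.span (Set.range x) ^ (e + 1) := by
  intro e
  induction e with
  | zero =>
    intro m z hz
    have hhom : (monomial (Finsupp.single 0 m) z : MvPolynomial (Fin (n+1)) R).IsHomogeneous m :=
      isHomogeneous_monomial _ (degree_single 0 m)
    have heval : eval x (monomial (Finsupp.single 0 m) z) = x 0 ^ m * z := by
      rw [eval_monomial, Finsupp.prod_single_index (by simp)]
      ring
    have hco := hQR m _ hhom (by rw [heval]; simpa using hz) (Finsupp.single 0 m)
    rw [coeff_monomial, if_pos rfl] at hco
    rw [zero_add, pow_one]
    exact hco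
  | succ e ih =>
    intro m z hz
    have hz' : z ∈ Ideal.span (Set.range x) ^ (e + 1) :=
      ih m z (Ideal.pow_le_pow_right (by omega) hz)
    obtain ⟨F, hFh, hFe⟩ := exists_homog x (e+1) z hz'
    have hhom : ((monomial (Finsupp.single 0 m) (1:R)) * F).IsHomogeneous (m + (e+1)) :=
      (isHomogeneous_monomial _ (degree_single 0 m)).mul hFh
    have heval : eval x ((monomial (Finsupp.single 0 m) (1:R)) * F) = x 0 ^ m * z := by
      rw [map_mul, eval_monomial, hFe, Finsupp.prod_single_index (by simp)]
      ring
    have hco := hQR (m + (e+1)) _ hhom (by rw [heval]; exact hz)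
    have hcF : ∀ m', coeff m' F ∈ Ideal.span (Set.range x) := by
      intro m'
      have h := hco (Finsupp.single 0 m + m')
      rwa [coeff_monomial_mul, one_mul] at h
    rw [← hFe]
    exact eval_mem_pow_succ hFh hcF

lemma colon_of_smulRegular {B : Type*} [CommRing B] {N : Ideal B} {c : B}
    (h : IsSMulRegular (B ⧸ (N • (⊤ : Submodule B B))) c) :
    ∀ z : B, z * c ∈ N → z ∈ N := by
  intro z hz
  have hN : (N • (⊤ : Submodule B B) : Submodule B B) = N := by
    rw [smul_eq_mul, Ideal.mul_top]
  have h0 : c • (Submodule.Quotient.mk z : B ⧸ (N • (⊤ : Submodule B B))) = c • 0 := by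
    rw [smul_zero, ← Submodule.Quotient.mk_smul, Submodule.Quotient.mk_eq_zero, hN,
      smul_eq_mul, mul_comm]
    exact hz
  have := h h0
  rwa [Submodule.Quotient.mk_eq_zero, hN] at this

lemma mem_take_ofFn {B : Type*} {r n : ℕ} (b : Fin r → B) (y : B) :
    y ∈ (List.ofFn b).take n ↔ ∃ k : Fin r, (k : ℕ) < n ∧ b k = y := by
  constructor
  · intro hy
    obtain ⟨i, hi, hget⟩ := List.getElem_of_mem hy
    have hi' : i < min n (List.ofFn b).length := by simpa using hi
    simp only [List.length_ofFn, lt_min_iff] at hi'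
    rw [List.getElem_take, List.getElem_ofFn] at hget
    exact ⟨⟨i, hi'.2⟩, hi'.1, hget⟩
  · rintro ⟨k, hk, rfl⟩
    have hlen : (k : ℕ) < ((List.ofFn b).take n).length := by
      simp [List.length_take, lt_min_iff, hk, k.isLt]
    have := List.getElem_mem hlen
    rwa [List.getElem_take, List.getElem_ofFn, Fin.eta] at this

lemma ofList_take_ofFn {B : Type*} [CommRing B] {r : ℕ} (b : Fin r → B) (n : ℕ) :
    Ideal.ofList ((List.ofFn b).take n) = Ideal.span (b '' {k | (k : ℕ) < n}) := by
  apply congrArg Ideal.span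
  ext y
  constructor
  · intro hy
    obtain ⟨k, hk, he⟩ := (mem_take_ofFn b y).mp hy
    exact ⟨k, hk, he⟩
  · rintro ⟨k, hk, rfl⟩
    exact (mem_take_ofFn b _).mpr ⟨k, hk, rfl⟩


end Statement11Aux

/- **Statement 11.**  Affine model: `f : Y = Spec B → X = Spec A` with section
`g : X → Y` given by an `A`-algebra map `g : B →ₐ[A] A`, and `D ⊆ X` the Cartier
divisor cut out by a nonzerodivisor `a : A`.  Assume `g` is a regular immersion:
`ker g` is generated by a regular sequence `b₁, …, b_r` of `B`.  The dilatation
`Y_(D)` of `Y` at `g(D)` (ideal `J = ker g + (a)`) with respect to `D` is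
`Dil = B[J/aᴮ] ⊆ B_{aᴮ}`, and its exceptional fiber
`E_(D) = E_[D] ∩ Y_(D) = Y_(D) ×_X D = Spec (Dil/(aᴮ))` is canonically the vector
bundle `V((g∘i)*Ω¹_{Y/X} ⊗ O_D(D))` over `D = Spec (A/a)`: since
`(g∘i)*Ω¹_{Y/X} ≅ i*N^∨_{X/Y} = (ker g)/(ker g)²⊗ A/a` is free of rank `r` on the
chosen regular generators and `O_D(D)` is trivialized by `a`, this is the affine
`r`-space `Spec ((A/a)[Y₁,…,Y_r])`. -/
set_option maxHeartbeats 1000000 in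
set_option synthInstance.maxHeartbeats 400000 in
open Statement11Aux in
theorem statement11 (A B : Type*) [CommRing A] [CommRing B] [Algebra A B]
    (g : B →ₐ[A] A) (a : A)
    (haA : a ∈ nonZeroDivisors A) (ha : algebraMap A B a ∈ nonZeroDivisors B)
    -- `g` is a regular immersion:
    (r : ℕ) (b : Fin r → B)
    (hgen : RingHom.ker g = Ideal.span (Set.range b))
    (hreg : RingTheory.Sequence.IsRegular B (List.ofFn b))
    (J : Ideal B) (hJ : J = RingHom.ker g ⊔ Ideal.span {algebraMap A B a})
    (Dil : Subalgebra B (Localization.Away (algebraMap A B a)))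
    (hDil : Dil = Algebra.adjoin B
      ((fun j => algebraMap B (Localization.Away (algebraMap A B a)) j *
        IsLocalization.Away.invSelf (S := Localization.Away (algebraMap A B a))
          (algebraMap A B a)) '' J)) :
    Nonempty
      ((Dil ⧸ Ideal.span {algebraMap B Dil (algebraMap A B a)}) ≃+*
        MvPolynomial (Fin r) (A ⧸ Ideal.span {a})) := by
  classical
  subst hJ
  subst hDil
  set α : B := algebraMap A B a with hα
  set Loc := Localization.Away α with hLoc
  set ι : B →+* Loc := algebraMap B Loc with hι'
  set u : Loc := IsLocalization.Away.invSelf (S := Loc) α with hu'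
  set J : Ideal B := RingHom.ker g ⊔ Ideal.span {α} with hJ
  set Dil : Subalgebra B Loc := Algebra.adjoin B ((fun j => ι j * u) '' J) with hDil
  have hαu : ι α * u = 1 := IsLocalization.Away.mul_invSelf α
  have hupow : ∀ k : ℕ, (ι α) ^ k * u ^ k = 1 := fun k => by
    rw [← mul_pow, hαu, one_pow]
  have hinj : Function.Injective ι :=
    IsLocalization.injective Loc (Submonoid.powers_le.mpr ha)
  -- the quasi-regular family
  set x : Fin (r+1) → B := Fin.cons α (b ∘ Fin.rev) with hx'
  have hx0 : x 0 = α := rfl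
  have hxs : ∀ j : Fin r, x j.succ = b j.rev := fun j => rfl
  have hrange : Set.range x = insert α (Set.range b) := by
    rw [hx', Fin.range_cons, Function.Surjective.range_comp Fin.rev_surjective]
  have hJx : J = Ideal.span (Set.range x) := by
    rw [hrange, Ideal.span_insert, hJ, hgen, sup_comm]
  -- the reversed-regularity condition
  have hRev : ∀ i : Fin (r+1), ∀ z : B, z * x i ∈ Ideal.span (x '' {j | i < j}) →
      z ∈ Ideal.span (x '' {j | i < j}) := by
    intro i
    induction i using Fin.cases with
    | zero =>
      have hset : x '' {j | 0 < j} = Set.range b := by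
        ext y; constructor
        · rintro ⟨j, hj, rfl⟩
          induction j using Fin.cases with
          | zero => exact absurd hj (by simp)
          | succ j' => exact ⟨j'.rev, rfl⟩
        · rintro ⟨k, rfl⟩
          exact ⟨k.rev.succ, k.rev.succ_pos, by rw [hxs, Fin.rev_rev]⟩
      rw [hset, ← hgen]
      intro z hz
      have h0 : g (z * α) = 0 := hz
      rw [map_mul] at h0
      have hgα : g α = a := by rw [hα]; exact g.commutes a
      rw [hgα] at h0
      exact mem_nonZeroDivisors_iff_right.mp haA _ h0
    | succ i' =>
      have hset : x '' {j | i'.succ < j} = b '' {k | (k : ℕ) < (i'.rev : ℕ)} := by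
        ext y; constructor
        · rintro ⟨j, hj, rfl⟩
          induction j using Fin.cases with
          | zero => exact absurd hj (by simp [Fin.lt_iff_val_lt_val])
          | succ j' =>
            refine ⟨j'.rev, ?_, rfl⟩
            have : i' < j' := Fin.succ_lt_succ_iff.mp hj
            exact Fin.lt_iff_val_lt_val.mp (Fin.rev_lt_rev.mpr this)
        · rintro ⟨k, hk, rfl⟩
          refine ⟨k.rev.succ, ?_, by rw [hxs, Fin.rev_rev]⟩
          rw [Set.mem_setOf_eq, Fin.succ_lt_succ_iff]
          have h1 : k < i'.rev := Fin.lt_iff_val_lt_val.mpr hk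
          have h2 : i'.rev.rev < k.rev := Fin.rev_lt_rev.mpr h1
          rwa [Fin.rev_rev] at h2
      rw [hset, ← ofList_take_ofFn]
      intro z hz
      have hlt : (i'.rev : ℕ) < (List.ofFn b).length := by
        rw [List.length_ofFn]; exact i'.rev.isLt
      have hsreg := hreg.toIsWeaklyRegular.regular_mod_prev (i'.rev : ℕ) hlt
      rw [List.getElem_ofFn, Fin.eta] at hsreg
      have hcol := colon_of_smulRegular hsreg z
      apply hcol
      rwa [hxs i'] at hz
  have hQR : QRseq x := qr_of_rev x hRev
  -- generators of Dil
  have hbK : ∀ j : Fin r, b j ∈ J := fun j => by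
    rw [hJ]
    exact Ideal.mem_sup_left (hgen ▸ Ideal.subset_span (Set.mem_range_self j))
  have hαJ : α ∈ J := by
    rw [hJ]
    exact Ideal.mem_sup_right (Ideal.subset_span rfl)
  set β : Fin r → Loc := fun j => ι (b j) * u with hβ'
  have hβDil : ∀ j, β j ∈ Dil := fun j => by
    rw [hDil]
    exact Algebra.subset_adjoin ⟨b j, hbK j, rfl⟩
  have hDilAdj : Dil = Algebra.adjoin B (Set.range β) := by
    rw [hDil]
    apply le_antisymm
    · apply Algebra.adjoin_le
      rintro y ⟨j, hjJ, rfl⟩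
      rw [hJ] at hjJ
      obtain ⟨p, hp, q, hq, rfl⟩ := Submodule.mem_sup.mp hjJ
      rw [hgen] at hp
      obtain ⟨c, rfl⟩ := Finsupp.mem_span_range_iff_exists_finsupp.mp hp
      obtain ⟨w, rfl⟩ := Ideal.mem_span_singleton'.mp hq
      have hexp : ι ((c.sum fun i ci => ci • b i) + w * α) * u
          = (c.sum fun i ci => ι ci * β i) + ι w := by
        rw [map_add, add_mul]
        congr 1
        · rw [map_finsuppSum, Finsupp.sum_mul]
          refine Finsupp.sum_congr fun i _ => ?_
          rw [smul_eq_mul, map_mul, hβ']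
          ring
        · rw [map_mul, mul_assoc, hαu, mul_one]
      show ι ((c.sum fun i ci => ci • b i) + w * α) * u ∈ _
      rw [hexp]
      refine add_mem ?_ (Subalgebra.algebraMap_mem _ w)
      rw [Finsupp.sum]
      refine sum_mem fun i _ => ?_
      exact mul_mem (Subalgebra.algebraMap_mem _ _)
        (Algebra.subset_adjoin (Set.mem_range_self i))
    · apply Algebra.adjoin_le
      rintro y ⟨j, rfl⟩
      exact Algebra.subset_adjoin ⟨b j, hbK j, rfl⟩
  have hdenom : ∀ q : Loc, q ∈ Dil → ∃ (n : ℕ) (c : B), c ∈ J ^ n ∧ q = ι c * u ^ n := by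
    intro q hq
    rw [hDil] at hq
    induction hq using Algebra.adjoin_induction with
    | mem y hy =>
      obtain ⟨j, hjJ, rfl⟩ := hy
      exact ⟨1, j, by rwa [pow_one], by rw [pow_one]⟩
    | algebraMap w => exact ⟨0, w, by simp, by simp [hι']⟩
    | add y z hy hz ihy ihz =>
      obtain ⟨n₁, c₁, hc₁, rfl⟩ := ihy
      obtain ⟨n₂, c₂, hc₂, rfl⟩ := ihz
      refine ⟨n₁ + n₂, c₁ * α ^ n₂ + c₂ * α ^ n₁, ?_, ?_⟩
      · apply Ideal.add_mem
        · have h1 : c₁ * α ^ n₂ ∈ J ^ n₁ * J ^ n₂ :=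
            Ideal.mul_mem_mul hc₁ (Ideal.pow_mem_pow hαJ n₂)
          rwa [← pow_add] at h1
        · have h1 : c₂ * α ^ n₁ ∈ J ^ n₂ * J ^ n₁ :=
            Ideal.mul_mem_mul hc₂ (Ideal.pow_mem_pow hαJ n₁)
          rwa [← pow_add, Nat.add_comm] at h1
      · rw [map_add, map_mul, map_mul, map_pow, map_pow, pow_add]
        linear_combination (- (ι c₁ * u ^ n₁)) * hupow n₂ + (- (ι c₂ * u ^ n₂)) * hupow n₁
    | mul y z hy hz ihy ihz =>
      obtain ⟨n₁, c₁, hc₁, rfl⟩ := ihy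
      obtain ⟨n₂, c₂, hc₂, rfl⟩ := ihz
      refine ⟨n₁ + n₂, c₁ * c₂, by rw [pow_add]; exact Ideal.mul_mem_mul hc₁ hc₂, ?_⟩
      rw [map_mul, pow_add]
      ring
  -- the presentation
  set β₂ : Fin r → Dil := fun j => ⟨β j, hβDil j⟩ with hβ₂
  set Ψ : MvPolynomial (Fin r) B →ₐ[B] Dil := MvPolynomial.aeval β₂ with hΨ'
  have hΨval : ∀ p : MvPolynomial (Fin r) B, ((Ψ p : Dil) : Loc) = MvPolynomial.aeval β p := by
    intro p
    have := congrArg (fun f => f p) (MvPolynomial.comp_aeval β₂ Dil.val)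
    exact this
  have hΨsurj : Function.Surjective Ψ := by
    intro q
    have hq : (q : Loc) ∈ Algebra.adjoin B (Set.range β) := hDilAdj ▸ q.2
    rw [Algebra.adjoin_range_eq_range_aeval] at hq
    obtain ⟨p, hp⟩ := hq
    exact ⟨p, Subtype.ext (by rw [hΨval]; exact hp)⟩
  set Θ : MvPolynomial (Fin r) B →+* (Dil ⧸ Ideal.span {algebraMap B Dil α}) :=
    (Ideal.Quotient.mk (Ideal.span {algebraMap B Dil α})).comp (Ψ : MvPolynomial (Fin r) B →+* Dil)
    with hΘ'
  have hΘsurj : Function.Surjective Θ :=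
    (Ideal.Quotient.mk_surjective).comp hΨsurj
  have htβ : ∀ k : Fin r, algebraMap B Dil (b k) = algebraMap B Dil α * β₂ k := by
    intro k
    apply Subtype.ext
    show ι (b k) = ι α * β k
    rw [hβ', ← mul_assoc, mul_comm (ι α) (ι (b k)), mul_assoc, hαu, mul_one]
  have hmemspan : ∀ j ∈ J, algebraMap B Dil j ∈ Ideal.span {algebraMap B Dil α} := by
    intro j hj
    rw [hJx] at hj
    induction hj using Submodule.span_induction with
    | mem y hy =>
      obtain ⟨i, rfl⟩ := hy
      induction i using Fin.cases with
      | zero => exact Ideal.subset_span rfl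
      | succ i' =>
        rw [hxs, htβ]
        exact Ideal.mul_mem_right _ _ (Ideal.subset_span rfl)
    | zero =>
      rw [RingHom.map_zero]
      exact zero_mem _
    | add y z hy hz ihy ihz => rw [map_add]; exact add_mem ihy ihz
    | smul z y hy ihy =>
      rw [smul_eq_mul, map_mul]
      exact Ideal.mul_mem_left _ _ ihy
  have hker : RingHom.ker Θ = Ideal.map MvPolynomial.C J := by
    apply le_antisymm
    · -- hard direction
      intro P hP
      rw [MvPolynomial.mem_map_C_iff]
      have hP' : Ψ P ∈ Ideal.span {algebraMap B Dil α} := by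
        rwa [RingHom.mem_ker, hΘ', RingHom.comp_apply,
          Ideal.Quotient.eq_zero_iff_mem] at hP
      obtain ⟨w, hw⟩ := Ideal.mem_span_singleton'.mp hP'
      obtain ⟨n, c, hc, hwv⟩ := hdenom (w : Loc) w.2
      have hval : MvPolynomial.aeval β P = (ι c * u ^ n) * ι α := by
        have h1 := congrArg (Subtype.val) hw
        rw [← hΨval P, ← h1]
        show ((w : Loc) * _) = _
        rw [hwv, Subalgebra.coe_algebraMap]
      obtain ⟨d, hd⟩ : ∃ d, d = P.totalDegree := ⟨_, rfl⟩
      obtain ⟨Mon, hMon⟩ : ∃ Mon : (Fin r →₀ ℕ) → (Fin (r+1) →₀ ℕ), Mon = fun mon =>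
          Finsupp.cons (d - mon.degree) (Finsupp.equivMapDomain Fin.revPerm mon) := ⟨_, rfl⟩
      obtain ⟨F, hF⟩ : ∃ F : MvPolynomial (Fin (r+1)) B,
          F = ∑ mon ∈ P.support, MvPolynomial.monomial (Mon mon) (MvPolynomial.coeff mon P) :=
        ⟨_, rfl⟩
      have hdeg : ∀ mon ∈ P.support, mon.degree ≤ d := fun mon hm =>
        hd ▸ MvPolynomial.le_totalDegree hm
      have hFhom : F.IsHomogeneous d := by
        rw [hF]
        refine MvPolynomial.IsHomogeneous.sum _ _ _ fun mon hm =>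
          MvPolynomial.isHomogeneous_monomial _ ?_
        rw [hMon]
        rw [degree_cons, degree_equivMapDomain]
        have := hdeg mon hm
        omega
      have hmonprod : ∀ mon : Fin r →₀ ℕ, (Mon mon).prod (fun i k => x i ^ k)
          = α ^ (d - mon.degree) * ∏ k : Fin r, b k ^ mon k := by
        intro mon
        rw [Finsupp.prod_pow, Fin.prod_univ_succ]
        congr 1
        · show x 0 ^ (Mon mon) 0 = α ^ (d - mon.degree)
          rw [hMon]
          simp only [Finsupp.cons_zero]
          rfl
        · rw [← Equiv.prod_comp Fin.revPerm (fun k => b k ^ mon k)]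
          refine Finset.prod_congr rfl fun i _ => ?_
          show x i.succ ^ (Mon mon) i.succ = b (Fin.revPerm i) ^ mon (Fin.revPerm i)
          rw [hxs i, hMon]
          simp only [Finsupp.cons_succ, Finsupp.equivMapDomain_apply]
          rfl
      have hVform : MvPolynomial.eval x F = ∑ mon ∈ P.support,
          MvPolynomial.coeff mon P * (α ^ (d - mon.degree) * ∏ k : Fin r, b k ^ mon k) := by
        rw [hF, map_sum]
        exact Finset.sum_congr rfl fun mon _ => by rw [MvPolynomial.eval_monomial, hmonprod]
      have hPbeta : MvPolynomial.aeval β P = ι (MvPolynomial.eval x F) * u ^ d := by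
        rw [hVform, MvPolynomial.aeval_def, MvPolynomial.eval₂_eq, map_sum, Finset.sum_mul]
        refine Finset.sum_congr rfl fun mon hm => ?_
        have hβprod : ∏ i ∈ mon.support, β i ^ mon i
            = ι (∏ i ∈ mon.support, b i ^ mon i) * u ^ mon.degree :=
          calc ∏ i ∈ mon.support, β i ^ mon i
              = ∏ i ∈ mon.support, (ι (b i) ^ mon i * u ^ mon i) := by
                refine Finset.prod_congr rfl fun i _ => ?_
                rw [hβ', mul_pow]
            _ = (∏ i ∈ mon.support, ι (b i) ^ mon i) * ∏ i ∈ mon.support, u ^ mon i :=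
                Finset.prod_mul_distrib
            _ = ι (∏ i ∈ mon.support, b i ^ mon i) * u ^ mon.degree := by
                rw [map_prod]
                simp_rw [map_pow]
                rw [Finset.prod_pow_eq_pow_sum]
                rfl
        have hprodsupp : ∏ k : Fin r, b k ^ mon k = ∏ i ∈ mon.support, b i ^ mon i :=
          (Finset.prod_subset (Finset.subset_univ _) (by
            intro i _ hi
            rw [Finsupp.notMem_support_iff.mp hi, pow_zero])).symm
        rw [hβprod, map_mul, map_mul, map_pow, hprodsupp]
        have hcancel : (ι α) ^ (d - mon.degree) * u ^ d = u ^ mon.degree := by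
          have hle := hdeg mon hm
          calc (ι α) ^ (d - mon.degree) * u ^ d
              = (ι α) ^ (d - mon.degree) * (u ^ (d - mon.degree) * u ^ mon.degree) := by
                rw [← pow_add, show (d - mon.degree) + mon.degree = d from by omega]
            _ = ((ι α) ^ (d - mon.degree) * u ^ (d - mon.degree)) * u ^ mon.degree := by ring
            _ = u ^ mon.degree := by rw [hupow, one_mul]
        linear_combination (- (ι (MvPolynomial.coeff mon P) *
          ι (∏ i ∈ mon.support, b i ^ mon i))) * hcancel
      have hEq : MvPolynomial.eval x F * α ^ n = c * α ^ (d + 1) := by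
        apply hinj
        rw [map_mul, map_mul, map_pow, map_pow]
        have hVeq : ι (MvPolynomial.eval x F) * u ^ d = ι c * u ^ n * ι α := by
          rw [← hPbeta, hval]
        linear_combination ((ι α) ^ (n + d)) * hVeq
          - (ι (MvPolynomial.eval x F) * (ι α) ^ n) * (hupow d)
          + (ι c * (ι α) ^ (d + 1)) * (hupow n)
      have hVmem : MvPolynomial.eval x F ∈ J ^ (d + 1) := by
        have h1 : α ^ n * MvPolynomial.eval x F ∈ J ^ (n + d + 1) := by
          rw [mul_comm, hEq]
          have h2 : c * α ^ (d + 1) ∈ J ^ n * J ^ (d + 1) :=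
            Ideal.mul_mem_mul hc (Ideal.pow_mem_pow hαJ _)
          rwa [← pow_add, show n + (d + 1) = n + d + 1 by omega] at h2
        have h3 := mem_pow_of_pow_zero_mul_mem hQR d n (MvPolynomial.eval x F)
          (by rw [hx0, ← hJx]; exact h1)
        rwa [← hJx] at h3
      have hFco := hQR d F hFhom (by rw [← hJx]; exact hVmem)
      intro m
      by_cases hm : m ∈ P.support
      · have h1 := hFco (Mon m)
        rw [hJx]
        have hMoninj : Function.Injective Mon := by
          intro m₁ m₂ h
          have h2 := congrArg Finsupp.tail h
          rw [hMon] at h2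
          simp only [Finsupp.tail_cons] at h2
          ext k
          have h3 := congrArg (fun f => f (Fin.rev k)) h2
          simp only [Finsupp.equivMapDomain_apply] at h3
          simpa [Fin.rev_rev] using h3
        have hco : MvPolynomial.coeff (Mon m) F = MvPolynomial.coeff m P := by
          rw [hF, MvPolynomial.coeff_sum]
          rw [Finset.sum_eq_single m]
          · rw [MvPolynomial.coeff_monomial, if_pos rfl]
          · intro m' _ hne
            rw [MvPolynomial.coeff_monomial, if_neg (fun h => hne (hMoninj h))]
          · intro h; exact absurd hm h
        rwa [hco] at h1
      · rw [MvPolynomial.notMem_support_iff.mp hm]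
        exact zero_mem _
    · -- easy direction
      rw [Ideal.map_le_iff_le_comap]
      intro j hj
      rw [Ideal.mem_comap, RingHom.mem_ker, hΘ', RingHom.comp_apply,
        Ideal.Quotient.eq_zero_iff_mem]
      have hΨC : Ψ (MvPolynomial.C j) = algebraMap B Dil j := by
        rw [hΨ', MvPolynomial.aeval_C]
      show Ψ (MvPolynomial.C j) ∈ _
      rw [hΨC]
      exact hmemspan j hj
  -- assemble the isomorphisms
  have E4 : (B ⧸ J) ≃+* (A ⧸ Ideal.span {a}) := by
    have hsurj : Function.Surjective ((Ideal.Quotient.mk (Ideal.span {a})).comp (g : B →+* A)) :=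
      Ideal.Quotient.mk_surjective.comp fun y => ⟨algebraMap A B y, g.commutes y⟩
    have hkg : RingHom.ker ((Ideal.Quotient.mk (Ideal.span {a})).comp (g : B →+* A)) = J := by
      ext z
      rw [RingHom.mem_ker, RingHom.comp_apply, Ideal.Quotient.eq_zero_iff_mem]
      constructor
      · intro hz
        obtain ⟨c, hc⟩ := Ideal.mem_span_singleton'.mp hz
        rw [hJ]
        refine Submodule.mem_sup.mpr ⟨z - algebraMap A B c * α, ?_, algebraMap A B c * α,
          Ideal.mul_mem_left _ _ (Ideal.subset_span rfl), by ring⟩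
        rw [RingHom.mem_ker]
        have hc' : c * a = g z := hc
        have hzz : g (z - algebraMap A B c * α) = 0 := by
          have h1 : g (algebraMap A B c) = c := by simp
          rw [map_sub, map_mul, show g α = a from g.commutes a, h1, ← hc', sub_self]
        exact hzz
      · intro hz
        rw [hJ] at hz
        obtain ⟨p, hp, q, hq, rfl⟩ := Submodule.mem_sup.mp hz
        obtain ⟨w, rfl⟩ := Ideal.mem_span_singleton'.mp hq
        show g (p + w * α) ∈ Ideal.span {a}
        have hp0 : g p = 0 := hp
        have hgα : g α = a := g.commutes a
        rw [map_add, hp0, map_mul, hgα, zero_add]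
        exact Ideal.mul_mem_left _ _ (Ideal.subset_span rfl)
    exact hkg ▸ RingHom.quotientKerEquivOfSurjective hsurj
  have E1 := RingHom.quotientKerEquivOfSurjective hΘsurj
  replace E1 := (Ideal.quotEquivOfEq hker.symm).trans E1
  have E2 := (MvPolynomial.quotientEquivQuotientMvPolynomial (σ := Fin r) J).toRingEquiv
  have E3 := MvPolynomial.mapEquiv (Fin r) E4
  exact ⟨E1.symm.trans (E2.symm.trans E3)⟩
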